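/- Let d ≥ 1 and let V be a nondegenerate k/κ-hermitian space of dimension 2d+1. Let W' ⊆ V be a special subspace of codimension d−1 (so dim W' = d+2). Then the map W ↦ W⊥ is a bijection from the set of special subspaces W ⊆ V of codimension 1 (i.e. dim W = 2d, W⊥ ⊆ W) such that W' ⊄ W and W ∩ W' is a special subspace of V (i.e. (W ∩ W')⊥ ⊆ W ∩ W'), onto the set of isotropic lines L ⊆ V with L ⊆ W' and L ⊄ W'⊥. -/

import Mathlib

open Module

variable {k : Type*} [Field k] {V : Type*} [AddCommGroup V] [Module k V]

/-- The orthogonal complement `U⊥ = {x : (x, u) = 0 for all u ∈ U}` of a subspace with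
respect to a sesquilinear form (linear in the first variable). -/
def perp {σ : k →+* k} (h : V →ₗ[k] V →ₛₗ[σ] k) (U : Submodule k V) : Submodule k V where
  carrier := {x | ∀ u ∈ U, h x u = 0}
  add_mem' := by
    intro x y hx hy u hu
    simp [hx u hu, hy u hu]
  zero_mem' := by
    intro u hu
    simp
  smul_mem' := by
    intro a x hx u hu
    simp [hx u hu]

section Aux

variable {σ : k →+* k} (h : V →ₗ[k] V →ₛₗ[σ] k)

lemma mem_perp {U : Submodule k V} {x : V} : x ∈ perp h U ↔ ∀ u ∈ U, h x u = 0 := Iff.rfl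

lemma perp_anti {U W : Submodule k V} (hUW : U ≤ W) : perp h W ≤ perp h U :=
  fun _x hx u hu => hx u (hUW hu)

lemma le_perp_perp (hherm : ∀ x y : V, h x y = σ (h y x)) (U : Submodule k V) :
    U ≤ perp h (perp h U) := fun x hx u hu => by
  rw [hherm, hu x hx, map_zero]

/-- The semilinear map `u ↦ (x ↦ h x u)` from `V` to its dual. -/
def perpPhi : V →ₛₗ[σ] Module.Dual k V where
  toFun u :=
    { toFun := fun x => h x u
      map_add' := fun x y => by simp
      map_smul' := fun c x => by simp }
  map_add' u v := by ext x; simp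
  map_smul' c u := by ext x; simp

variable [Fintype k] [FiniteDimensional k V]

lemma sigma_surj : Function.Surjective σ :=
  Finite.injective_iff_surjective.mp σ.injective

lemma perp_eq_dualCoannihilator (U : Submodule k V) :
    haveI : RingHomSurjective σ := ⟨sigma_surj (σ := σ)⟩
    perp h U = (U.map (perpPhi h)).dualCoannihilator := by
  haveI : RingHomSurjective σ := ⟨sigma_surj (σ := σ)⟩
  ext x
  rw [Submodule.mem_dualCoannihilator, mem_perp]
  constructor
  · rintro hx f ⟨u, hu, rfl⟩
    exact hx u hu
  · intro hx u hu
    exact hx _ ⟨u, hu, rfl⟩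

lemma finrank_perp_add (hherm : ∀ x y : V, h x y = σ (h y x))
    (hnd : ∀ x : V, (∀ y : V, h x y = 0) → x = 0) (U : Submodule k V) :
    finrank k (perp h U) + finrank k U = finrank k V := by
  classical
  haveI : RingHomSurjective σ := ⟨sigma_surj (σ := σ)⟩
  haveI : Finite V := Module.finite_of_finite k
  haveI : Fintype V := Fintype.ofFinite V
  set S := U.map (perpPhi h) with hS
  have hrank : finrank k S = finrank k U := by
    have hinj : Function.Injective (perpPhi h (σ := σ)) := by
      intro u v huv
      have hz : ∀ x : V, h x (u - v) = 0 := by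
        intro x
        have := congrArg (fun f => f x) huv
        simp only [perpPhi, LinearMap.coe_mk, AddHom.coe_mk] at this
        simp [map_sub, this]
      have : u - v = 0 := by
        apply hnd
        intro y
        rw [hherm, hz y, map_zero]
      exact sub_eq_zero.mp this
    haveI : Finite (Module.Dual k V) := Module.finite_of_finite k
    haveI : Fintype S := Fintype.ofFinite _
    haveI : Fintype U := Fintype.ofFinite _
    have hcard : Fintype.card S = Fintype.card U := by
      refine (Fintype.card_congr ?_).symm
      refine Equiv.ofBijective (fun u => ⟨perpPhi h u.1, Submodule.mem_map_of_mem u.2⟩) ?_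
      constructor
      · intro a b hab
        exact Subtype.ext (hinj (congrArg Subtype.val hab))
      · rintro ⟨f, u, hu, rfl⟩
        exact ⟨⟨u, hu⟩, rfl⟩
    have h1 : Fintype.card S = Fintype.card k ^ finrank k S := Module.card_eq_pow_finrank (K := k) (V := S)
    have h2 : Fintype.card U = Fintype.card k ^ finrank k U := Module.card_eq_pow_finrank (K := k) (V := U)
    have := h1 ▸ h2 ▸ hcard
    exact Nat.pow_right_injective Fintype.one_lt_card this
  rw [perp_eq_dualCoannihilator, ← hS, ← hrank, add_comm]
  exact Subspace.finrank_add_finrank_dualCoannihilator_eq (K := k) (V := V) S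

lemma perp_perp (hherm : ∀ x y : V, h x y = σ (h y x))
    (hnd : ∀ x : V, (∀ y : V, h x y = 0) → x = 0) (U : Submodule k V) :
    perp h (perp h U) = U := by
  refine (Submodule.eq_of_le_of_finrank_le (le_perp_perp h hherm U) ?_).symm
  have h1 := finrank_perp_add h hherm hnd U
  have h2 := finrank_perp_add h hherm hnd (perp h U)
  omega

lemma perp_inf (hherm : ∀ x y : V, h x y = σ (h y x))
    (hnd : ∀ x : V, (∀ y : V, h x y = 0) → x = 0) (U W : Submodule k V) :
    perp h (U ⊓ W) = perp h U ⊔ perp h W := by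
  have hle : perp h U ⊔ perp h W ≤ perp h (U ⊓ W) :=
    sup_le (perp_anti h inf_le_left) (perp_anti h inf_le_right)
  have hinf : perp h (U ⊔ W) = perp h U ⊓ perp h W := by
    apply le_antisymm
    · exact le_inf (perp_anti h le_sup_left) (perp_anti h le_sup_right)
    · rintro x ⟨hxU, hxW⟩ v hv
      rcases Submodule.mem_sup.mp hv with ⟨u, hu, w, hw, rfl⟩
      rw [map_add, hxU u hu, hxW w hw, add_zero]
  refine (Submodule.eq_of_le_of_finrank_le hle ?_).symm
  have h1 := finrank_perp_add h hherm hnd (U ⊓ W)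
  have h2 := finrank_perp_add h hherm hnd U
  have h3 := finrank_perp_add h hherm hnd W
  have h4 := finrank_perp_add h hherm hnd (U ⊔ W)
  have h5 : finrank k ↥(perp h U ⊔ perp h W) + finrank k ↥(perp h U ⊓ perp h W) =
      finrank k (perp h U) + finrank k (perp h W) :=
    Submodule.finrank_sup_add_finrank_inf_eq _ _
  rw [← hinf] at h5
  have h6 : finrank k ↥(U ⊔ W) + finrank k ↥(U ⊓ W) = finrank k U + finrank k W :=
    Submodule.finrank_sup_add_finrank_inf_eq _ _
  omega

end Aux

/-- Let `V` be a nondegenerate `k/κ`-hermitian space of dimension `2d+1`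
and `W' ⊆ V` a special subspace of codimension `d-1`. Then `W ↦ W⊥` is a bijection from
the set of special subspaces `W` of codimension `1` with `W' ⊄ W` and `W ∩ W'` special,
onto the set of isotropic lines `L ⊆ W'` with `L ⊄ W'⊥`. -/
theorem perp_bijOn_special_nontransverse (q d : ℕ) (hd : 1 ≤ d)
    [Fintype k] (hcard : Fintype.card k = q ^ 2)
    [FiniteDimensional k V] (hdim : finrank k V = 2 * d + 1)
    (σ : k →+* k) (hσ : ∀ x : k, σ x = x ^ q)
    (h : V →ₗ[k] V →ₛₗ[σ] k)
    (hherm : ∀ x y : V, h x y = σ (h y x))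
    (hnd : ∀ x : V, (∀ y : V, h x y = 0) → x = 0)
    (W' : Submodule k V) (hW' : perp h W' ≤ W') (hW'dim : finrank k W' = d + 2) :
    Set.BijOn (perp h)
      {W : Submodule k V | finrank k W = 2 * d ∧ perp h W ≤ W ∧ ¬ W' ≤ W ∧
        perp h (W ⊓ W') ≤ W ⊓ W'}
      {L : Submodule k V | finrank k L = 1 ∧ (∀ x ∈ L, ∀ y ∈ L, h x y = 0) ∧
        L ≤ W' ∧ ¬ L ≤ perp h W'} := by
  have ppk : ∀ U : Submodule k V, perp h (perp h U) = U := perp_perp h hherm hnd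
  have frk : ∀ U : Submodule k V, finrank k (perp h U) + finrank k U = finrank k V :=
    finrank_perp_add h hherm hnd
  refine ⟨?_, ?_, ?_⟩
  · -- MapsTo
    rintro W ⟨hWdim, hWsp, hWne, hWi⟩
    have hLW' : perp h W ≤ W ⊓ W' := le_trans (perp_anti h inf_le_left) hWi
    refine ⟨?_, ?_, le_trans hLW' inf_le_right, ?_⟩
    · have := frk W
      omega
    · intro x hx y hy
      exact hx y (hWsp hy)
    · intro hcon
      apply hWne
      have := perp_anti h hcon
      rw [ppk, ppk] at this
      exact this
  · -- InjOn
    intro W₁ _ W₂ _ hW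
    rw [← ppk W₁, ← ppk W₂, hW]
  · -- SurjOn
    rintro L ⟨hLdim, hLiso, hLW', hLnp⟩
    refine ⟨perp h L, ⟨?_, ?_, ?_, ?_⟩, ppk L⟩
    · have := frk L
      omega
    · rw [ppk]
      intro x hx u hu
      exact hLiso x hx u hu
    · intro hcon
      apply hLnp
      have := perp_anti h hcon
      rw [ppk] at this
      exact this
    · rw [perp_inf h hherm hnd, ppk]
      refine sup_le (le_inf ?_ hLW') (le_inf ?_ hW')
      · intro x hx u hu
        exact hLiso x hx u hu
      · intro x hx u hu
        exact hx u (hLW' hu)
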